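/- With G and G* as in the Blanuša block insertion construction, G* contains a spanning subgraph homeomorphic to G: namely (G \ {x x''', x' x''}) together with the two paths x u_0 u_3 u_4 u_7 x''' and x' u_2 u_1 u_6 u_5 x'' through the inserted block B_0. -/

import Mathlib

open SimpleGraph Classical

/-- The claw `K_{1,3}`: vertex `0` is the center, adjacent to `1,2,3`. -/
def clawGraph : SimpleGraph (Fin 4) :=
  SimpleGraph.fromEdgeSet {s((0:Fin 4),1), s((0:Fin 4),2), s((0:Fin 4),3)}

/-- A graph is cubic if every vertex has exactly 3 neighbours. -/
def IsCubic {V : Type*} (G : SimpleGraph V) : Prop :=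
  ∀ v : V, (G.neighborSet v).ncard = 3

/-- `M` is a perfect pseudo-matching of `G`: a spanning subgraph each of whose
connected components is isomorphic to `K₂` or to the claw `K_{1,3}`. -/
def IsPerfectPseudoMatching {V : Type*} (G M : SimpleGraph V) : Prop :=
  M ≤ G ∧ ∀ c : M.ConnectedComponent,
    Nonempty ((M.induce c.supp) ≃g (⊤ : SimpleGraph (Fin 2))) ∨
    Nonempty ((M.induce c.supp) ≃g clawGraph)

/-- `C` is a cycle, given as a subgraph of `G`: nonempty edge set, every vertex of
degree `0` or `2`, and connected on its support. -/
def IsCycleSubgraph {V : Type*} (G C : SimpleGraph V) : Prop :=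
  C ≤ G ∧ C.edgeSet.Nonempty ∧
  (∀ v : V, (C.neighborSet v).ncard = 0 ∨ (C.neighborSet v).ncard = 2) ∧
  (∀ u v : V, u ∈ C.support → v ∈ C.support → C.Reachable u v)

/-- A dominating cycle: every edge of `G` has an endpoint on `C`. -/
def IsDominatingCycle {V : Type*} (G C : SimpleGraph V) : Prop :=
  IsCycleSubgraph G C ∧ ∀ u v : V, G.Adj u v → u ∈ C.support ∨ v ∈ C.support

/-- `C` is a connected component of `D` which is a cycle. -/
def IsComponentCycleOf {V : Type*} (D C : SimpleGraph V) : Prop :=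
  IsCycleSubgraph D C ∧ ∀ u v : V, u ∈ C.support → D.Adj u v → C.Adj u v

/-- A proper 3-edge-colouring of `G`. -/
def IsProper3EdgeColoring {V : Type*} (G : SimpleGraph V) (c : Sym2 V → Fin 3) : Prop :=
  ∀ e ∈ G.edgeSet, ∀ f ∈ G.edgeSet, e ≠ f → (∃ v : V, v ∈ e ∧ v ∈ f) → c e ≠ c f

def Proper3EdgeColorable {V : Type*} (G : SimpleGraph V) : Prop :=
  ∃ c : Sym2 V → Fin 3, IsProper3EdgeColoring G c

/-- A cycle double cover of `G` containing, among its members, specified cycles. -/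
def IsCycleDoubleCover {V : Type*} (G : SimpleGraph V) {n : ℕ}
    (F : Fin n → SimpleGraph V) : Prop :=
  (∀ i, IsCycleSubgraph G (F i)) ∧
  ∀ e ∈ G.edgeSet, {i : Fin n | e ∈ (F i).edgeSet}.ncard = 2

/-- A cycle in the contracted multigraph `G/M`: a cyclic sequence of pairwise distinct
edges of `G \ E(M)` joining pairwise distinct components of `M`. -/
structure ContractedCycle {V : Type*} (G M : SimpleGraph V) where
  n : ℕ
  hn : 0 < n
  edge : Fin n → Sym2 V
  vtx : Fin n → M.ConnectedComponent
  mem : ∀ i, edge i ∈ G.edgeSet \ M.edgeSet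
  edge_inj : Function.Injective edge
  vtx_inj : Function.Injective vtx
  ends : ∀ i : Fin n, ∃ x y : V, edge i = s(x, y) ∧
    M.connectedComponentMk x = vtx i ∧
    M.connectedComponentMk y = vtx (i + ⟨1 % n, Nat.mod_lt _ hn⟩)

/-- The edge set of a contracted cycle. -/
def ContractedCycle.edges {V : Type*} {G M : SimpleGraph V} (c : ContractedCycle G M) :
    Set (Sym2 V) := Set.range c.edge

/-- A decomposition of the contracted multigraph `G/M` into cycles, compatible with the
transition system `T_M` induced by the cycles of `G \ E(M)` (i.e. no cycle of the
decomposition contains two distinct edges sharing a vertex of `G`). -/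
def IsCompatibleCycleDecomposition {V : Type*} (G M : SimpleGraph V)
    (D : Set (ContractedCycle G M)) : Prop :=
  (∀ e ∈ G.edgeSet \ M.edgeSet, ∃ c ∈ D, e ∈ c.edges) ∧
  (∀ c ∈ D, ∀ c' ∈ D, c ≠ c' → Disjoint c.edges c'.edges) ∧
  (∀ c ∈ D, ∀ e ∈ c.edges, ∀ f ∈ c.edges, e ≠ f → ¬ ∃ v : V, v ∈ e ∧ v ∈ f)

/-- The intersection graph of a family of cycles of `G/M`: two distinct cycles are
adjacent iff they meet in a vertex of `G/M`. -/
def intersectionGraph {V : Type*} (G M : SimpleGraph V) (D : Set (ContractedCycle G M)) :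
    SimpleGraph D where
  Adj a b := a ≠ b ∧ ∃ w : M.ConnectedComponent,
    w ∈ Set.range a.1.vtx ∧ w ∈ Set.range b.1.vtx
  symm := by
    constructor
    rintro a b ⟨hne, w, h1, h2⟩
    exact ⟨hne.symm, w, h2, h1⟩
  loopless := by
    constructor
    rintro a ⟨hne, -⟩
    exact hne rfl

/-- `H` is a minor of `G` (branch-set definition). -/
def IsMinorOf {α β : Type*} (H : SimpleGraph α) (G : SimpleGraph β) : Prop :=
  ∃ f : α → Set β, (∀ a, (f a).Nonempty) ∧ (∀ a, (G.induce (f a)).Connected) ∧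
    (Pairwise (Function.onFun Disjoint f)) ∧
    ∀ a b, H.Adj a b → ∃ x ∈ f a, ∃ y ∈ f b, G.Adj x y

/-- Planarity, via Wagner's theorem: no `K₅` and no `K_{3,3}` minor. -/
def IsPlanar {β : Type*} (G : SimpleGraph β) : Prop :=
  ¬ IsMinorOf (⊤ : SimpleGraph (Fin 5)) G ∧
  ¬ IsMinorOf (completeBipartiteGraph (Fin 3) (Fin 3)) G

/-- The simple graph underlying the contraction `G/M`. -/
def contractedSimple {V : Type*} (G M : SimpleGraph V) : SimpleGraph M.ConnectedComponent where
  Adj c d := c ≠ d ∧ ∃ x y : V, G.Adj x y ∧ ¬ M.Adj x y ∧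
    M.connectedComponentMk x = c ∧ M.connectedComponentMk y = d
  symm := by
    constructor
    rintro c d ⟨hne, x, y, h1, h2, h3, h4⟩
    exact ⟨hne.symm, y, x, h1.symm, fun h => h2 h.symm, h4, h3⟩
  loopless := by
    constructor
    rintro c ⟨hne, -⟩
    exact hne rfl

/-- Number of endpoints (with multiplicity) of the edge `e` lying in the part `c`. -/
noncomputable def endCount {V α : Type*} (e : Sym2 V) (g : V → α) (c : α) : ℕ :=
  Sym2.lift ⟨fun x y => (if g x = c then 1 else 0) + (if g y = c then 1 else 0),
    fun x y => by dsimp; omega⟩ e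

/-- The degree of a component `c` of `M` in the contracted multigraph `G/M`. -/
noncomputable def contractedDegree {V : Type*} (G M : SimpleGraph V)
    (c : M.ConnectedComponent) : ℕ :=
  ∑ᶠ e ∈ (G.edgeSet \ M.edgeSet), endCount e (M.connectedComponentMk) c

/-- The first Blanuša block `B₀`, with vertices `u₀,…,u₇ = 0,…,7` and pendant vertices
`a = 8`, `b = 9`, `b' = 10`, `a' = 11` (the pendant edges model the four half-edges). -/
def blanusaB0 : SimpleGraph (Fin 12) :=
  SimpleGraph.fromEdgeSet
    {s((8 : Fin 12), 0), s((9 : Fin 12), 5), s((10 : Fin 12), 2), s((11 : Fin 12), 7),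
     s((0 : Fin 12), 1), s((1 : Fin 12), 2), s((5 : Fin 12), 6), s((6 : Fin 12), 7),
     s((3 : Fin 12), 4), s((0 : Fin 12), 3), s((3 : Fin 12), 5), s((1 : Fin 12), 6),
     s((2 : Fin 12), 4), s((4 : Fin 12), 7)}

/-- The graph `G*` obtained from `G` by deleting the crossing edges `x x'''` and `x' x''`
and inserting a Blanuša block `B₀` (on the new vertices `Sum.inr 0, …, Sum.inr 7`), joining
`x` to `u₀` (half-edge `a`), `x'''` to `u₇` (half-edge `a'`), `x'` to `u₂` (half-edge `b'`)
and `x''` to `u₅` (half-edge `b`). -/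
def blanusaInsert {V : Type*} (G : SimpleGraph V) (x x' x'' x''' : V) :
    SimpleGraph (V ⊕ Fin 8) :=
  SimpleGraph.fromEdgeSet (
    (Sym2.map Sum.inl '' (G.edgeSet \ {s(x, x'''), s(x', x'')})) ∪
    {s(Sum.inl x, Sum.inr 0), s(Sum.inl x''', Sum.inr 7),
     s(Sum.inl x', Sum.inr 2), s(Sum.inl x'', Sum.inr 5),
     s(Sum.inr (0 : Fin 8), Sum.inr 1), s(Sum.inr (1 : Fin 8), Sum.inr 2),
     s(Sum.inr (5 : Fin 8), Sum.inr 6), s(Sum.inr (6 : Fin 8), Sum.inr 7),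
     s(Sum.inr (3 : Fin 8), Sum.inr 4), s(Sum.inr (0 : Fin 8), Sum.inr 3),
     s(Sum.inr (3 : Fin 8), Sum.inr 5), s(Sum.inr (1 : Fin 8), Sum.inr 6),
     s(Sum.inr (2 : Fin 8), Sum.inr 4), s(Sum.inr (4 : Fin 8), Sum.inr 7)})

/-- `H` is a subdivision of `G`: there is an embedding `f` of the vertices of `G` and a
choice of internally disjoint paths in `H` joining the images of the ends of each edge of
`G`, which together exhaust all edges and vertices of `H`. -/
def IsSubdivisionOf {W V : Type*} (H : SimpleGraph W) (G : SimpleGraph V) : Prop :=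
  ∃ (f : V ↪ W) (w : ∀ u v : V, G.Adj u v → H.Walk (f u) (f v)),
    (∀ u v (h : G.Adj u v), (w u v h).IsPath) ∧
    (∀ u v (h : G.Adj u v), w v u h.symm = (w u v h).reverse) ∧
    (∀ u v (h : G.Adj u v) (t : W), t ∈ (w u v h).support → t ∈ Set.range f →
      t = f u ∨ t = f v) ∧
    (∀ u v (h : G.Adj u v) (t : W), t ∈ (w u v h).support → t ∉ Set.range f →
      ∀ u' v' (h' : G.Adj u' v'), t ∈ (w u' v' h').support → s(u, v) = s(u', v')) ∧
    (∀ e ∈ H.edgeSet, ∃ (u v : V) (h : G.Adj u v), e ∈ (w u v h).edges) ∧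
    (∀ t : W, t ∈ Set.range f ∨ ∃ (u v : V) (h : G.Adj u v), t ∈ (w u v h).support)

/-- The spanning subgraph of `G* = blanusaInsert G x x' x'' x'''` consisting of
`G \ {x x''', x' x''}` together with the two paths `x u₀ u₃ u₄ u₇ x'''` and
`x' u₂ u₁ u₆ u₅ x''` through the inserted Blanuša block. -/
def blanusaPathSpan {V : Type*} (G : SimpleGraph V) (x x' x'' x''' : V) :
    SimpleGraph (V ⊕ Fin 8) :=
  SimpleGraph.fromEdgeSet (
    (Sym2.map Sum.inl '' (G.edgeSet \ {s(x, x'''), s(x', x'')})) ∪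
    {s(Sum.inl x, Sum.inr 0), s(Sum.inr (0 : Fin 8), Sum.inr 3),
     s(Sum.inr (3 : Fin 8), Sum.inr 4), s(Sum.inr (4 : Fin 8), Sum.inr 7),
     s(Sum.inl x''', Sum.inr 7),
     s(Sum.inl x', Sum.inr 2), s(Sum.inr (2 : Fin 8), Sum.inr 1),
     s(Sum.inr (1 : Fin 8), Sum.inr 6), s(Sum.inr (6 : Fin 8), Sum.inr 5),
     s(Sum.inl x'', Sum.inr 5)})

section BlanusaAux

open SimpleGraph

variable {V : Type*} (G : SimpleGraph V) (x x' x'' x''' : V)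

private lemma bSpan_adj_aux {a b : V ⊕ Fin 8}
    (hmem : s(a, b) ∈ (
      (Sym2.map Sum.inl '' (G.edgeSet \ {s(x, x'''), s(x', x'')})) ∪
      {s(Sum.inl x, Sum.inr 0), s(Sum.inr (0 : Fin 8), Sum.inr 3),
       s(Sum.inr (3 : Fin 8), Sum.inr 4), s(Sum.inr (4 : Fin 8), Sum.inr 7),
       s(Sum.inl x''', Sum.inr 7),
       s(Sum.inl x', Sum.inr 2), s(Sum.inr (2 : Fin 8), Sum.inr 1),
       s(Sum.inr (1 : Fin 8), Sum.inr 6), s(Sum.inr (6 : Fin 8), Sum.inr 5),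
       s(Sum.inl x'', Sum.inr 5)} : Set (Sym2 (V ⊕ Fin 8)))) (hne : a ≠ b) :
    (blanusaPathSpan G x x' x'' x''').Adj a b := by
  rw [blanusaPathSpan, SimpleGraph.fromEdgeSet_adj]
  exact ⟨hmem, hne⟩

private lemma bA1 : (blanusaPathSpan G x x' x'' x''').Adj (Sum.inl x) (Sum.inr 0) :=
  bSpan_adj_aux G x x' x'' x''' (by simp) (by simp)
private lemma bA2 : (blanusaPathSpan G x x' x'' x''').Adj (Sum.inr 0) (Sum.inr 3) :=
  bSpan_adj_aux G x x' x'' x''' (by simp) (by simp)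
private lemma bA3 : (blanusaPathSpan G x x' x'' x''').Adj (Sum.inr 3) (Sum.inr 4) :=
  bSpan_adj_aux G x x' x'' x''' (by simp) (by simp)
private lemma bA4 : (blanusaPathSpan G x x' x'' x''').Adj (Sum.inr 4) (Sum.inr 7) :=
  bSpan_adj_aux G x x' x'' x''' (by simp) (by simp)
private lemma bA5 : (blanusaPathSpan G x x' x'' x''').Adj (Sum.inr 7) (Sum.inl x''') :=
  (bSpan_adj_aux G x x' x'' x''' (by simp) (by simp)).symm
private lemma bB1 : (blanusaPathSpan G x x' x'' x''').Adj (Sum.inl x') (Sum.inr 2) :=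
  bSpan_adj_aux G x x' x'' x''' (by simp) (by simp)
private lemma bB2 : (blanusaPathSpan G x x' x'' x''').Adj (Sum.inr 2) (Sum.inr 1) :=
  bSpan_adj_aux G x x' x'' x''' (by simp) (by simp)
private lemma bB3 : (blanusaPathSpan G x x' x'' x''').Adj (Sum.inr 1) (Sum.inr 6) :=
  bSpan_adj_aux G x x' x'' x''' (by simp) (by simp)
private lemma bB4 : (blanusaPathSpan G x x' x'' x''').Adj (Sum.inr 6) (Sum.inr 5) :=
  bSpan_adj_aux G x x' x'' x''' (by simp) (by simp)
private lemma bB5 : (blanusaPathSpan G x x' x'' x''').Adj (Sum.inr 5) (Sum.inl x'') :=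
  (bSpan_adj_aux G x x' x'' x''' (by simp) (by simp)).symm

/-- The path `x u₀ u₃ u₄ u₇ x'''`. -/
def bP1 : (blanusaPathSpan G x x' x'' x''').Walk (Sum.inl x) (Sum.inl x''') :=
  .cons (bA1 G x x' x'' x''') (.cons (bA2 G x x' x'' x''')
    (.cons (bA3 G x x' x'' x''') (.cons (bA4 G x x' x'' x''')
    (.cons (bA5 G x x' x'' x''') .nil))))

/-- The path `x' u₂ u₁ u₆ u₅ x''`. -/
def bP2 : (blanusaPathSpan G x x' x'' x''').Walk (Sum.inl x') (Sum.inl x'') :=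
  .cons (bB1 G x x' x'' x''') (.cons (bB2 G x x' x'' x''')
    (.cons (bB3 G x x' x'' x''') (.cons (bB4 G x x' x'' x''')
    (.cons (bB5 G x x' x'' x''') .nil))))

noncomputable def bW (u v : V) (h : G.Adj u v) :
    (blanusaPathSpan G x x' x'' x''').Walk (Sum.inl u) (Sum.inl v) :=
  if h1 : u = x ∧ v = x''' then
    (bP1 G x x' x'' x''').copy (by rw [h1.1]) (by rw [h1.2])
  else if h2 : u = x''' ∧ v = x then
    (bP1 G x x' x'' x''').reverse.copy (by rw [h2.1]) (by rw [h2.2])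
  else if h3 : u = x' ∧ v = x'' then
    (bP2 G x x' x'' x''').copy (by rw [h3.1]) (by rw [h3.2])
  else if h4 : u = x'' ∧ v = x' then
    (bP2 G x x' x'' x''').reverse.copy (by rw [h4.1]) (by rw [h4.2])
  else
    .cons (bSpan_adj_aux G x x' x'' x'''
      (Or.inl ⟨s(u, v), ⟨G.mem_edgeSet.mpr h, by
        simp only [Set.mem_insert_iff, Set.mem_singleton_iff, Sym2.eq_iff]
        tauto⟩, rfl⟩)
      (by simp [h.ne])) .nil

lemma bW_eq1 (h : G.Adj x x''') :
    bW G x x' x'' x''' x x''' h = bP1 G x x' x'' x''' := by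
  unfold bW; rw [dif_pos ⟨rfl, rfl⟩]
  exact SimpleGraph.Walk.copy_rfl_rfl _

lemma bW_eq2 (hne : x ≠ x''') (h : G.Adj x''' x) :
    bW G x x' x'' x''' x''' x h = (bP1 G x x' x'' x''').reverse := by
  unfold bW
  rw [dif_neg (fun hc => hne hc.2), dif_pos ⟨rfl, rfl⟩]
  exact SimpleGraph.Walk.copy_rfl_rfl _

lemma bW_eq3 (hne1 : x' ≠ x) (hne2 : x' ≠ x''') (h : G.Adj x' x'') :
    bW G x x' x'' x''' x' x'' h = bP2 G x x' x'' x''' := by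
  unfold bW
  rw [dif_neg (fun hc => hne1 hc.1), dif_neg (fun hc => hne2 hc.1), dif_pos ⟨rfl, rfl⟩]
  exact SimpleGraph.Walk.copy_rfl_rfl _

lemma bW_eq4 (hne1 : x'' ≠ x) (hne2 : x'' ≠ x''') (hne3 : x'' ≠ x') (h : G.Adj x'' x') :
    bW G x x' x'' x''' x'' x' h = (bP2 G x x' x'' x''').reverse := by
  unfold bW
  rw [dif_neg (fun hc => hne1 hc.1), dif_neg (fun hc => hne2 hc.1),
    dif_neg (fun hc => hne3 hc.1), dif_pos ⟨rfl, rfl⟩]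
  exact SimpleGraph.Walk.copy_rfl_rfl _

lemma bW_single (u v : V) (h : G.Adj u v) (n1 : ¬(u = x ∧ v = x'''))
    (n2 : ¬(u = x''' ∧ v = x)) (n3 : ¬(u = x' ∧ v = x''))
    (n4 : ¬(u = x'' ∧ v = x')) :
    ∃ a : (blanusaPathSpan G x x' x'' x''').Adj (Sum.inl u) (Sum.inl v),
      bW G x x' x'' x''' u v h = .cons a .nil := by
  unfold bW
  rw [dif_neg n1, dif_neg n2, dif_neg n3, dif_neg n4]
  exact ⟨_, rfl⟩

lemma bP1_support : (bP1 G x x' x'' x''').support =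
    [Sum.inl x, Sum.inr 0, Sum.inr 3, Sum.inr 4, Sum.inr 7, Sum.inl x'''] := rfl

lemma bP2_support : (bP2 G x x' x'' x''').support =
    [Sum.inl x', Sum.inr 2, Sum.inr 1, Sum.inr 6, Sum.inr 5, Sum.inl x''] := rfl

lemma bP1_edges : (bP1 G x x' x'' x''').edges =
    [s(Sum.inl x, Sum.inr 0), s(Sum.inr 0, Sum.inr 3), s(Sum.inr 3, Sum.inr 4),
     s(Sum.inr 4, Sum.inr 7), s(Sum.inr 7, Sum.inl x''')] := rfl

lemma bP2_edges : (bP2 G x x' x'' x''').edges =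
    [s(Sum.inl x', Sum.inr 2), s(Sum.inr 2, Sum.inr 1), s(Sum.inr 1, Sum.inr 6),
     s(Sum.inr 6, Sum.inr 5), s(Sum.inr 5, Sum.inl x'')] := rfl

lemma bP1_isPath (hne : x ≠ x''') : (bP1 G x x' x'' x''').IsPath := by
  rw [SimpleGraph.Walk.isPath_def, bP1_support]
  simp [hne]

lemma bP2_isPath (hne : x' ≠ x'') : (bP2 G x x' x'' x''').IsPath := by
  rw [SimpleGraph.Walk.isPath_def, bP2_support]
  simp [hne]

lemma bW_support_cases (u v : V) (h : G.Adj u v) (t : V ⊕ Fin 8)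
    (ht : t ∈ (bW G x x' x'' x''' u v h).support) :
    (∃ s : V, t = Sum.inl s) ∨
    ((t = Sum.inr 0 ∨ t = Sum.inr 3 ∨ t = Sum.inr 4 ∨ t = Sum.inr 7) ∧
      s(u, v) = s(x, x''')) ∨
    ((t = Sum.inr 2 ∨ t = Sum.inr 1 ∨ t = Sum.inr 6 ∨ t = Sum.inr 5) ∧
      s(u, v) = s(x', x'')) := by
  unfold bW at ht
  split_ifs at ht with h1 h2 h3 h4
  · obtain ⟨rfl, rfl⟩ := h1
    rw [SimpleGraph.Walk.support_copy, bP1_support] at ht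
    simp only [List.mem_cons, List.not_mem_nil, or_false] at ht
    rcases ht with rfl|rfl|rfl|rfl|rfl|rfl <;> simp [Sym2.eq_iff]
  · obtain ⟨rfl, rfl⟩ := h2
    rw [SimpleGraph.Walk.support_copy, SimpleGraph.Walk.support_reverse,
      bP1_support] at ht
    simp only [List.mem_reverse, List.mem_cons, List.not_mem_nil, or_false] at ht
    rcases ht with rfl|rfl|rfl|rfl|rfl|rfl <;> simp [Sym2.eq_iff]
  · obtain ⟨rfl, rfl⟩ := h3
    rw [SimpleGraph.Walk.support_copy, bP2_support] at ht
    simp only [List.mem_cons, List.not_mem_nil, or_false] at ht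
    rcases ht with rfl|rfl|rfl|rfl|rfl|rfl <;> simp [Sym2.eq_iff]
  · obtain ⟨rfl, rfl⟩ := h4
    rw [SimpleGraph.Walk.support_copy, SimpleGraph.Walk.support_reverse,
      bP2_support] at ht
    simp only [List.mem_reverse, List.mem_cons, List.not_mem_nil, or_false] at ht
    rcases ht with rfl|rfl|rfl|rfl|rfl|rfl <;> simp [Sym2.eq_iff]
  · simp only [SimpleGraph.Walk.support_cons, SimpleGraph.Walk.support_nil,
      List.mem_cons, List.not_mem_nil, or_false] at ht
    rcases ht with rfl|rfl
    · exact Or.inl ⟨u, rfl⟩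
    · exact Or.inl ⟨v, rfl⟩

end BlanusaAux

/-- `G*` contains a spanning subgraph homeomorphic to `G`, namely
`(G \ {x x''', x' x''})` together with the two paths `x u₀ u₃ u₄ u₇ x'''` and
`x' u₂ u₁ u₆ u₅ x''` through the inserted block. -/
theorem blanusaInsert_spanning_subdivision
    {V : Type*} [Fintype V] (G : SimpleGraph V) (x x' x'' x''' : V)
    (hcubic : IsCubic G)
    (he1 : G.Adj x x''') (he2 : G.Adj x' x'')
    (hdist : [x, x', x'', x'''].Nodup) :
    blanusaPathSpan G x x' x'' x''' ≤ blanusaInsert G x x' x'' x''' ∧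
    IsSubdivisionOf (blanusaPathSpan G x x' x'' x''') G := by
  simp only [List.nodup_cons, List.mem_cons, List.mem_singleton, List.not_mem_nil,
    or_false, not_or, List.nodup_nil, and_true, not_false_iff] at hdist
  obtain ⟨⟨hxx', hxx'', hxx'''⟩, ⟨hx'x'', hx'x'''⟩, hx''x'''⟩ := hdist
  constructor
  · rw [blanusaPathSpan, blanusaInsert]
    apply SimpleGraph.fromEdgeSet_mono
    intro e he
    rcases he with h | h
    · exact Or.inl h
    · right
      simp only [Set.mem_insert_iff, Set.mem_singleton_iff] at h ⊢
      rcases h with rfl|rfl|rfl|rfl|rfl|rfl|rfl|rfl|rfl|rfl <;> simp [Sym2.eq_iff]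
  · refine ⟨⟨Sum.inl, Sum.inl_injective⟩, bW G x x' x'' x''', ?_, ?_, ?_, ?_, ?_, ?_⟩
    · -- IsPath
      intro u v h
      by_cases h1 : u = x ∧ v = x'''
      · obtain ⟨hu, hv⟩ := h1
        obtain rfl := hu.symm
        obtain rfl := hv.symm
        rw [bW_eq1]
        exact bP1_isPath G x x' x'' x''' hxx'''
      by_cases h2 : u = x''' ∧ v = x
      · obtain ⟨hu, hv⟩ := h2
        obtain rfl := hu.symm
        obtain rfl := hv.symm
        rw [bW_eq2 G x x' x'' x''' hxx''']
        exact (bP1_isPath G x x' x'' x''' hxx''').reverse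
      by_cases h3 : u = x' ∧ v = x''
      · obtain ⟨hu, hv⟩ := h3
        obtain rfl := hu.symm
        obtain rfl := hv.symm
        rw [bW_eq3 G x x' x'' x''' (Ne.symm hxx') hx'x''']
        exact bP2_isPath G x x' x'' x''' hx'x''
      by_cases h4 : u = x'' ∧ v = x'
      · obtain ⟨hu, hv⟩ := h4
        obtain rfl := hu.symm
        obtain rfl := hv.symm
        rw [bW_eq4 G x x' x'' x''' (Ne.symm hxx'') hx''x''' (Ne.symm hx'x'')]
        exact (bP2_isPath G x x' x'' x''' hx'x'').reverse
      · obtain ⟨a, ha⟩ := bW_single G x x' x'' x''' u v h h1 h2 h3 h4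
        rw [ha]
        simp [SimpleGraph.Walk.isPath_def, h.ne]
    · -- reverse
      intro u v h
      by_cases h1 : u = x ∧ v = x'''
      · obtain ⟨hu, hv⟩ := h1
        obtain rfl := hu.symm
        obtain rfl := hv.symm
        rw [bW_eq1, bW_eq2 G x x' x'' x''' hxx''']
      by_cases h2 : u = x''' ∧ v = x
      · obtain ⟨hu, hv⟩ := h2
        obtain rfl := hu.symm
        obtain rfl := hv.symm
        rw [bW_eq1, bW_eq2 G x x' x'' x''' hxx''', SimpleGraph.Walk.reverse_reverse]
      by_cases h3 : u = x' ∧ v = x''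
      · obtain ⟨hu, hv⟩ := h3
        obtain rfl := hu.symm
        obtain rfl := hv.symm
        rw [bW_eq3 G x x' x'' x''' (Ne.symm hxx') hx'x''',
          bW_eq4 G x x' x'' x''' (Ne.symm hxx'') hx''x''' (Ne.symm hx'x'')]
      by_cases h4 : u = x'' ∧ v = x'
      · obtain ⟨hu, hv⟩ := h4
        obtain rfl := hu.symm
        obtain rfl := hv.symm
        rw [bW_eq3 G x x' x'' x''' (Ne.symm hxx') hx'x''',
          bW_eq4 G x x' x'' x''' (Ne.symm hxx'') hx''x''' (Ne.symm hx'x''),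
          SimpleGraph.Walk.reverse_reverse]
      · obtain ⟨a, ha⟩ := bW_single G x x' x'' x''' u v h h1 h2 h3 h4
        obtain ⟨a', ha'⟩ := bW_single G x x' x'' x''' v u h.symm
          (fun hc => h2 ⟨hc.2, hc.1⟩) (fun hc => h1 ⟨hc.2, hc.1⟩)
          (fun hc => h4 ⟨hc.2, hc.1⟩) (fun hc => h3 ⟨hc.2, hc.1⟩)
        rw [ha, ha']
        rfl
    · -- support in range
      intro u v h t ht hr
      simp only [Function.Embedding.coeFn_mk] at hr ⊢
      obtain ⟨s, rfl⟩ := hr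
      by_cases h1 : u = x ∧ v = x'''
      · obtain ⟨hu, hv⟩ := h1
        obtain rfl := hu.symm
        obtain rfl := hv.symm
        rw [bW_eq1, bP1_support] at ht
        simp only [List.mem_cons, List.not_mem_nil, or_false, Sum.inl.injEq,
          reduceCtorEq, Function.Embedding.coeFn_mk, false_or] at ht
        rcases ht with rfl|rfl
        · exact Or.inl rfl
        · exact Or.inr rfl
      by_cases h2 : u = x''' ∧ v = x
      · obtain ⟨hu, hv⟩ := h2
        obtain rfl := hu.symm
        obtain rfl := hv.symm
        rw [bW_eq2 G x x' x'' x''' hxx''', SimpleGraph.Walk.support_reverse,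
          bP1_support] at ht
        simp only [List.mem_reverse, List.mem_cons, List.not_mem_nil, or_false,
          Sum.inl.injEq, reduceCtorEq, Function.Embedding.coeFn_mk, false_or] at ht
        rcases ht with rfl|rfl
        · exact Or.inr rfl
        · exact Or.inl rfl
      by_cases h3 : u = x' ∧ v = x''
      · obtain ⟨hu, hv⟩ := h3
        obtain rfl := hu.symm
        obtain rfl := hv.symm
        rw [bW_eq3 G x x' x'' x''' (Ne.symm hxx') hx'x''', bP2_support] at ht
        simp only [List.mem_cons, List.not_mem_nil, or_false, Sum.inl.injEq,
          reduceCtorEq, Function.Embedding.coeFn_mk, false_or] at ht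
        rcases ht with rfl|rfl
        · exact Or.inl rfl
        · exact Or.inr rfl
      by_cases h4 : u = x'' ∧ v = x'
      · obtain ⟨hu, hv⟩ := h4
        obtain rfl := hu.symm
        obtain rfl := hv.symm
        rw [bW_eq4 G x x' x'' x''' (Ne.symm hxx'') hx''x''' (Ne.symm hx'x''),
          SimpleGraph.Walk.support_reverse, bP2_support] at ht
        simp only [List.mem_reverse, List.mem_cons, List.not_mem_nil, or_false,
          Sum.inl.injEq, reduceCtorEq, Function.Embedding.coeFn_mk, false_or] at ht
        rcases ht with rfl|rfl
        · exact Or.inr rfl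
        · exact Or.inl rfl
      · obtain ⟨a, ha⟩ := bW_single G x x' x'' x''' u v h h1 h2 h3 h4
        rw [ha] at ht
        simp only [SimpleGraph.Walk.support_cons, SimpleGraph.Walk.support_nil,
          List.mem_cons, List.not_mem_nil, or_false, Sum.inl.injEq,
          Function.Embedding.coeFn_mk, false_or] at ht
        rcases ht with rfl|rfl
        · exact Or.inl rfl
        · exact Or.inr rfl
    · -- internal vertices determine the edge
      intro u v h t ht hnr u' v' h' ht'
      rcases bW_support_cases G x x' x'' x''' u v h t ht with ⟨s, rfl⟩ | ⟨hk, he⟩ | ⟨hk, he⟩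
      · exact absurd ⟨s, rfl⟩ hnr
      · rcases bW_support_cases G x x' x'' x''' u' v' h' t ht' with
          ⟨s, rfl⟩ | ⟨hk', he'⟩ | ⟨hk', he'⟩
        · exact absurd ⟨s, rfl⟩ hnr
        · rw [he, he']
        · rcases hk with rfl|rfl|rfl|rfl <;> rcases hk' with h''|h''|h''|h'' <;> simp_all
      · rcases bW_support_cases G x x' x'' x''' u' v' h' t ht' with
          ⟨s, rfl⟩ | ⟨hk', he'⟩ | ⟨hk', he'⟩
        · exact absurd ⟨s, rfl⟩ hnr
        · rcases hk with rfl|rfl|rfl|rfl <;> rcases hk' with h''|h''|h''|h'' <;> simp_all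
        · rw [he, he']
    · -- all edges covered
      intro e he
      rw [blanusaPathSpan, SimpleGraph.edgeSet_fromEdgeSet] at he
      obtain ⟨hS, hd⟩ := he
      rcases hS with ⟨e0, he0, rfl⟩ | h10
      · induction e0 using Sym2.ind with
        | _ u v =>
          obtain ⟨hG, hni⟩ := he0
          have h : G.Adj u v := hG
          simp only [Set.mem_insert_iff, Set.mem_singleton_iff, Sym2.eq_iff] at hni
          have n1 : ¬(u = x ∧ v = x''') := fun hc => hni (Or.inl (Or.inl hc))
          have n2 : ¬(u = x''' ∧ v = x) := fun hc => hni (Or.inl (Or.inr hc))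
          have n3 : ¬(u = x' ∧ v = x'') := fun hc => hni (Or.inr (Or.inl hc))
          have n4 : ¬(u = x'' ∧ v = x') := fun hc => hni (Or.inr (Or.inr hc))
          obtain ⟨a, ha⟩ := bW_single G x x' x'' x''' u v h n1 n2 n3 n4
          exact ⟨u, v, h, by rw [ha]; simp⟩
      · simp only [Set.mem_insert_iff, Set.mem_singleton_iff] at h10
        rcases h10 with rfl|rfl|rfl|rfl|rfl|rfl|rfl|rfl|rfl|rfl
        · exact ⟨x, x''', he1, by rw [bW_eq1]; simp [bP1_edges, Sym2.eq_iff]⟩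
        · exact ⟨x, x''', he1, by rw [bW_eq1]; simp [bP1_edges, Sym2.eq_iff]⟩
        · exact ⟨x, x''', he1, by rw [bW_eq1]; simp [bP1_edges, Sym2.eq_iff]⟩
        · exact ⟨x, x''', he1, by rw [bW_eq1]; simp [bP1_edges, Sym2.eq_iff]⟩
        · exact ⟨x, x''', he1, by rw [bW_eq1]; simp [bP1_edges, Sym2.eq_iff]⟩
        · exact ⟨x', x'', he2, by
            rw [bW_eq3 G x x' x'' x''' (Ne.symm hxx') hx'x''']
            simp [bP2_edges, Sym2.eq_iff]⟩
        · exact ⟨x', x'', he2, by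
            rw [bW_eq3 G x x' x'' x''' (Ne.symm hxx') hx'x''']
            simp [bP2_edges, Sym2.eq_iff]⟩
        · exact ⟨x', x'', he2, by
            rw [bW_eq3 G x x' x'' x''' (Ne.symm hxx') hx'x''']
            simp [bP2_edges, Sym2.eq_iff]⟩
        · exact ⟨x', x'', he2, by
            rw [bW_eq3 G x x' x'' x''' (Ne.symm hxx') hx'x''']
            simp [bP2_edges, Sym2.eq_iff]⟩
        · exact ⟨x', x'', he2, by
            rw [bW_eq3 G x x' x'' x''' (Ne.symm hxx') hx'x''']
            simp [bP2_edges, Sym2.eq_iff]⟩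
    · -- all vertices covered
      intro t
      cases t with
      | inl s => exact Or.inl ⟨s, rfl⟩
      | inr k =>
        right
        fin_cases k
        · exact ⟨x, x''', he1, by rw [bW_eq1, bP1_support]; simp⟩
        · exact ⟨x', x'', he2, by
            rw [bW_eq3 G x x' x'' x''' (Ne.symm hxx') hx'x''', bP2_support]; simp⟩
        · exact ⟨x', x'', he2, by
            rw [bW_eq3 G x x' x'' x''' (Ne.symm hxx') hx'x''', bP2_support]; simp⟩
        · exact ⟨x, x''', he1, by rw [bW_eq1, bP1_support]; simp⟩
        · exact ⟨x, x''', he1, by rw [bW_eq1, bP1_support]; simp⟩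
        · exact ⟨x', x'', he2, by
            rw [bW_eq3 G x x' x'' x''' (Ne.symm hxx') hx'x''', bP2_support]; simp⟩
        · exact ⟨x', x'', he2, by
            rw [bW_eq3 G x x' x'' x''' (Ne.symm hxx') hx'x''', bP2_support]; simp⟩
        · exact ⟨x, x''', he1, by rw [bW_eq1, bP1_support]; simp⟩
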